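/- Assume that for all g ∈ G and i ∈ I, ρ(g)(x_i) lies in the span of {x_j : d(j) = g d(i) g⁻¹} (Yetter–Drinfeld compatibility of the degree function d). If b satisfies the cocycle condition b(gh, x_i) = b(g, ρ(h)x_i) + b(h, x_i) for all g, h ∈ G and i ∈ I, then the linear maps T(g) : V ⊕ kG → V ⊕ kG defined by T(g)(x_i, 0) = (ρ(g)x_i, b(g, x_i)(1 − g d(i) g⁻¹)) and T(g)(0, a) = (0, Ad(g)a) satisfy T(gh) = T(g) ∘ T(h) for all g, h ∈ G; that is, they make M = V ⊕ kG a kG-module which is an extension of V by kG, where kG carries the adjoint action. -/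

import Mathlib

/-- The adjoint action `Ad(g) : kG → kG`, the `k`-linear extension of `a ↦ g a g⁻¹`. -/
noncomputable def AdL (k : Type*) {G : Type*} [Field k] [Group G] (g : G) :
    MonoidAlgebra k G →ₗ[k] MonoidAlgebra k G :=
  LinearMap.mulLeft k (MonoidAlgebra.of k G g) ∘ₗ
    LinearMap.mulRight k (MonoidAlgebra.of k G g⁻¹)

/-- The linear map `T(g) : V ⊕ kG → V ⊕ kG` with
`T(g)(x_i, 0) = (ρ(g)x_i, b(g,x_i)(1 − g d(i) g⁻¹))` and `T(g)(0, a) = (0, Ad(g)a)`. -/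
noncomputable def extAction (k : Type*) {G I V : Type*} [Field k] [Group G]
    [AddCommGroup V] [Module k V]
    (x : Module.Basis I k V) (ρ : G →* (V ≃ₗ[k] V)) (d : I → G) (b : G → I → k) (g : G) :
    V × MonoidAlgebra k G →ₗ[k] V × MonoidAlgebra k G :=
  LinearMap.prod
    ((ρ g).toLinearMap ∘ₗ LinearMap.fst k V (MonoidAlgebra k G))
    ((x.constr k fun i =>
        b g i • ((1 : MonoidAlgebra k G) - MonoidAlgebra.of k G (g * d i * g⁻¹))) ∘ₗ
        LinearMap.fst k V (MonoidAlgebra k G) +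
      AdL k g ∘ₗ LinearMap.snd k V (MonoidAlgebra k G))

lemma AdL_apply (k : Type*) {G : Type*} [Field k] [Group G] (g : G) (a : MonoidAlgebra k G) :
    AdL k g a = MonoidAlgebra.of k G g * a * MonoidAlgebra.of k G g⁻¹ := by
  simp [AdL, mul_assoc]

lemma AdL_mul (k : Type*) {G : Type*} [Field k] [Group G] (g h : G) :
    AdL k (g * h) = AdL k g ∘ₗ AdL k h := by
  ext a
  simp [AdL_apply, map_mul, mul_assoc]

lemma constr_span {k G I V : Type*} [Field k] [Group G] [AddCommGroup V] [Module k V]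
    (x : Module.Basis I k V) (d : I → G) (b : G → I → k) (g c : G) {v : V}
    (hv : v ∈ Submodule.span k {v | ∃ j, d j = c ∧ v = x j}) :
    (x.constr k fun i =>
        b g i • ((1 : MonoidAlgebra k G) - MonoidAlgebra.of k G (g * d i * g⁻¹))) v
      = (x.constr k fun j => b g j) v •
          ((1 : MonoidAlgebra k G) - MonoidAlgebra.of k G (g * c * g⁻¹)) := by
  induction hv using Submodule.span_induction with
  | mem v hv =>
    obtain ⟨j, hj, rfl⟩ := hv
    simp [Module.Basis.constr_basis, hj]
  | zero => simp
  | add u w _ _ hu hw => rw [map_add, map_add, hu, hw, add_smul]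
  | smul a u _ hu => rw [map_smul, map_smul, hu, smul_eq_mul, mul_smul]

lemma keyB {k G I V : Type*} [Field k] [Group G] [AddCommGroup V] [Module k V]
    (x : Module.Basis I k V) (ρ : G →* (V ≃ₗ[k] V)) (d : I → G) (b : G → I → k)
    (hYD : ∀ (g : G) (i : I),
      (ρ g) (x i) ∈ Submodule.span k {v | ∃ j, d j = g * d i * g⁻¹ ∧ v = x j})
    (hcoc : ∀ (g h : G) (i : I),
      b (g * h) i = (x.constr k fun j => b g j) ((ρ h) (x i)) + b h i)
    (g h : G) (i : I) :
    (x.constr k fun j =>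
        b (g * h) j • ((1 : MonoidAlgebra k G) - MonoidAlgebra.of k G (g * h * d j * (g * h)⁻¹)))
        (x i)
      = (x.constr k fun j =>
          b g j • ((1 : MonoidAlgebra k G) - MonoidAlgebra.of k G (g * d j * g⁻¹)))
          ((ρ h) (x i))
        + AdL k g ((x.constr k fun j =>
            b h j • ((1 : MonoidAlgebra k G) - MonoidAlgebra.of k G (h * d j * h⁻¹))) (x i)) := by
  rw [constr_span x d b g (h * d i * h⁻¹) (hYD h i), Module.Basis.constr_basis, Module.Basis.constr_basis]
  have h1 : MonoidAlgebra.of k G g * MonoidAlgebra.of k G g⁻¹ = 1 := by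
    rw [← map_mul, mul_inv_cancel, map_one]
  have hAd : AdL k g (b h i • ((1 : MonoidAlgebra k G) - MonoidAlgebra.of k G (h * d i * h⁻¹)))
      = b h i • ((1 : MonoidAlgebra k G) - MonoidAlgebra.of k G (g * (h * d i * h⁻¹) * g⁻¹)) := by
    rw [map_smul, AdL_apply, mul_sub, sub_mul, mul_one, h1, ← map_mul, ← map_mul]
  have hgrp : g * h * d i * (g * h)⁻¹ = g * (h * d i * h⁻¹) * g⁻¹ := by group
  rw [hAd, hgrp, hcoc g h i, add_smul]

/-- Given the Yetter–Drinfeld compatibility of the degree function `d` and the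
cocycle condition on `b`, the maps `T(g)` satisfy `T(gh) = T(g) ∘ T(h)`, i.e. they make
`M = V ⊕ kG` a `kG`-module which is an extension of `V` by `kG` (with `kG` carrying the
adjoint action). -/
theorem extAction_mul {k G I V : Type*} [Field k] [Group G]
    [AddCommGroup V] [Module k V]
    (x : Module.Basis I k V) (ρ : G →* (V ≃ₗ[k] V)) (d : I → G) (b : G → I → k)
    (hYD : ∀ (g : G) (i : I),
      (ρ g) (x i) ∈ Submodule.span k {v | ∃ j, d j = g * d i * g⁻¹ ∧ v = x j})
    (hcoc : ∀ (g h : G) (i : I),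
      b (g * h) i = (x.constr k fun j => b g j) ((ρ h) (x i)) + b h i) :
    ∀ g h : G,
      extAction k x ρ d b (g * h) = (extAction k x ρ d b g) ∘ₗ extAction k x ρ d b h := by
  intro g h
  have hB : (x.constr k fun j =>
        b (g * h) j • ((1 : MonoidAlgebra k G) - MonoidAlgebra.of k G (g * h * d j * (g * h)⁻¹)))
      = (x.constr k fun j =>
          b g j • ((1 : MonoidAlgebra k G) - MonoidAlgebra.of k G (g * d j * g⁻¹))) ∘ₗ
            (ρ h).toLinearMap
        + AdL k g ∘ₗ (x.constr k fun j =>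
            b h j • ((1 : MonoidAlgebra k G) - MonoidAlgebra.of k G (h * d j * h⁻¹))) := by
    apply x.ext
    intro i
    simpa using keyB x ρ d b hYD hcoc g h i
  apply LinearMap.ext
  rintro ⟨v, a⟩
  simp only [extAction, LinearMap.prod_apply, LinearMap.coe_comp, Function.comp_apply,
    LinearMap.add_apply, LinearMap.fst_apply, LinearMap.snd_apply, Function.prod, Prod.mk.injEq,
    LinearEquiv.coe_coe]
  constructor
  · rw [map_mul]; rfl
  · rw [hB, AdL_mul]
    simp only [LinearMap.add_apply, LinearMap.coe_comp, Function.comp_apply, map_add,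
      LinearEquiv.coe_coe]
    abel
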